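/- Let G be a group acting by isometries on a length space X, discontinuously and cocompactly with compact fundamental set K containing a basepoint x₀, and let ε > 0 satisfy: for all g ∈ G, either gK ∩ K ≠ ∅ or d(gK, K) > ε. Suppose every g with gK ∩ K ≠ ∅ lies within distance 2 of the identity in a graph metric d_Γ on G (e.g., the coned-off Cayley graph restricted to the orbit of the base vertex). Then for all p, q in the G-orbit of the base vertex, d_Γ(p, q) < (2/ε)·d_X(f(p), f(q)) + 4, where f is the orbit map g·v₀ ↦ g·x₀. In particular the orbit map is a quasi-isometric embedding. -/

import Mathlib

open Pointwise

/-- A metric space is a length space: approximate midpoints always exist. -/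
def IsLengthSpace (X : Type*) [MetricSpace X] : Prop :=
  ∀ x y : X, ∀ ε > (0 : ℝ), ∃ z : X,
    dist x z ≤ dist x y / 2 + ε ∧ dist z y ≤ dist x y / 2 + ε

/-- The distance between two subsets of a metric space. -/
noncomputable def setDist {X : Type*} [MetricSpace X] (A B : Set X) : ℝ :=
  sInf ((fun p : X × X => dist p.1 p.2) '' (A ×ˢ B))

lemma setDist_le_dist {X : Type*} [MetricSpace X] {A B : Set X} {a b : X}
    (ha : a ∈ A) (hb : b ∈ B) : setDist A B ≤ dist a b := by
  apply csInf_le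
  · exact ⟨0, fun x hx => by obtain ⟨p, hp, rfl⟩ := hx; exact dist_nonneg⟩
  · exact ⟨(a, b), ⟨ha, hb⟩, rfl⟩


/-- Dyadic chain lemma. -/
lemma chain_lemma {X : Type*} [MetricSpace X] (hlength : IsLengthSpace X) :
    ∀ (k : ℕ) (x y : X) (δ : ℝ), 0 < δ → ∃ z : ℕ → X, z 0 = x ∧ z (2 ^ k) = y ∧
      ∀ i < 2 ^ k, dist (z i) (z (i + 1)) ≤ dist x y / 2 ^ k + δ := by
  intro k
  induction k with
  | zero =>
    intro x y δ hδ
    refine ⟨fun i => if i = 0 then x else y, by simp, by simp, ?_⟩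
    intro i hi
    have hi0 : i = 0 := by omega
    subst hi0
    show dist (if (0:ℕ) = 0 then x else y) (if (0:ℕ) + 1 = 0 then x else y)
        ≤ dist x y / 2 ^ 0 + δ
    rw [if_pos rfl, if_neg (by omega)]
    norm_num
    linarith
  | succ k IH =>
    intro x y δ hδ
    obtain ⟨m, hm1, hm2⟩ := hlength x y (δ / 2) (by linarith)
    obtain ⟨z₁, hz10, hz1N, hz1s⟩ := IH x m (δ / 2) (by linarith)
    obtain ⟨z₂, hz20, hz2N, hz2s⟩ := IH m y (δ / 2) (by linarith)
    have key : ∀ a b : X, dist a b ≤ dist x y / 2 + δ / 2 →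
        dist a b / 2 ^ k + δ / 2 ≤ dist x y / 2 ^ (k + 1) + δ := by
      intro a b hab
      have h2k : (1:ℝ) ≤ 2 ^ k := one_le_pow₀ one_le_two
      have hpos : (0:ℝ) < 2 ^ k := by positivity
      have c1 : dist a b / 2 ^ k ≤ (dist x y / 2 + δ / 2) / 2 ^ k := by gcongr
      have c2 : (dist x y / 2 + δ / 2) / 2 ^ k
          = dist x y / 2 ^ (k + 1) + δ / (2 * 2 ^ k) := by
        rw [pow_succ]; field_simp
      have c3 : δ / (2 * 2 ^ k) ≤ δ / 2 := by
        rw [div_le_div_iff₀ (by positivity) (by norm_num)]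
        nlinarith
      linarith
    set N := 2 ^ k with hNdef
    have hNpos : 0 < N := by positivity
    have hpow2 : 2 ^ (k + 1) = N + N := by rw [pow_succ]; omega
    have hmz : z₁ N = z₂ 0 := by rw [hz1N, hz20]
    refine ⟨fun i => if i < N then z₁ i else z₂ (i - N), ?_, ?_, ?_⟩
    · show (if 0 < N then z₁ 0 else z₂ (0 - N)) = x
      rw [if_pos hNpos, hz10]
    · show (if 2 ^ (k+1) < N then z₁ _ else z₂ (2 ^ (k+1) - N)) = y
      rw [if_neg (by omega), show 2 ^ (k+1) - N = N by omega, hz2N]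
    · intro i hi
      rw [hpow2] at hi
      by_cases hcase : i < N
      · have e2 : (if i + 1 < N then z₁ (i + 1) else z₂ (i + 1 - N)) = z₁ (i + 1) := by
          by_cases h2 : i + 1 < N
          · exact if_pos h2
          · rw [if_neg h2, show i + 1 - N = 0 by omega, ← hmz, show N = i + 1 by omega]
        show dist (if i < N then z₁ i else z₂ (i - N))
            (if i + 1 < N then z₁ (i + 1) else z₂ (i + 1 - N)) ≤ _
        rw [if_pos hcase, e2]
        calc dist (z₁ i) (z₁ (i + 1))
            ≤ dist x m / 2 ^ k + δ / 2 := hz1s i hcase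
          _ ≤ dist x y / 2 ^ (k + 1) + δ := key x m hm1
      · have hi2 : i - N < N := by omega
        show dist (if i < N then z₁ i else z₂ (i - N))
            (if i + 1 < N then z₁ (i + 1) else z₂ (i + 1 - N)) ≤ _
        rw [if_neg hcase, if_neg (by omega), show i + 1 - N = i - N + 1 by omega]
        calc dist (z₂ (i - N)) (z₂ (i - N + 1))
            ≤ dist m y / 2 ^ k + δ / 2 := hz2s _ hi2
          _ ≤ dist x y / 2 ^ (k + 1) + δ := key m y hm2

/-- Approximate intermediate point lemma. -/
lemma intermediate_point {X : Type*} [MetricSpace X] (hlength : IsLengthSpace X)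
    (x y : X) (r t : ℝ) (hr : 0 < r) (ht : 0 < t) (hd : dist x y < r + t) :
    ∃ w : X, dist x w < r ∧ dist w y < t := by
  classical
  set d := dist x y with hddef
  have hd0 : 0 ≤ d := dist_nonneg
  set c := r + t - d with hcdef
  have hc : 0 < c := by simp [hcdef]; linarith
  obtain ⟨k, hk⟩ : ∃ k : ℕ, d / (c / 3) < 2 ^ k :=
    pow_unbounded_of_one_lt (d / (c / 3)) one_lt_two
  have hpk : (0:ℝ) < 2 ^ k := by positivity
  have hdk : d < 2 ^ k * (c / 3) := by
    rw [div_lt_iff₀ (by linarith)] at hk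
    linarith [hk]
  set δ := c / (3 * 2 ^ k) with hδdef
  have hδ : 0 < δ := by positivity
  obtain ⟨z, hz0, hzN, hzs⟩ := chain_lemma hlength k x y δ (by positivity)
  set N := 2 ^ k with hNdef
  have hNcast : ((N : ℕ) : ℝ) = 2 ^ k := by push_cast [hNdef]; ring
  set s := d / 2 ^ k + δ with hsdef
  have hsc : s < 2 * (c / 3) := by
    have h1 : d / 2 ^ k < c / 3 := by
      rw [div_lt_iff₀ hpk]; linarith [hdk]
    have h2 : δ ≤ c / 3 := by
      rw [hδdef, div_le_div_iff₀ (by positivity) (by norm_num)]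
      nlinarith [one_le_pow₀ (le_of_lt one_lt_two) (n := k) (M₀ := ℝ)]
    linarith
  set S : ℕ → ℝ := fun j => ∑ i ∈ Finset.range j, dist (z i) (z (i + 1)) with hSdef
  have hstep : ∀ i < N, dist (z i) (z (i + 1)) ≤ s := by
    intro i hi; exact hzs i hi
  clear_value d c δ N s S
  have hSN : S N ≤ d + c / 3 := by
    have h1 : S N ≤ N * s := by
      rw [hSdef]
      calc ∑ i ∈ Finset.range N, dist (z i) (z (i + 1)) ≤ ∑ i ∈ Finset.range N, s :=
          Finset.sum_le_sum (fun i hi => hstep i (Finset.mem_range.mp hi))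
        _ = N * s := by rw [Finset.sum_const, Finset.card_range]; simp [nsmul_eq_mul]
    have h2 : (N : ℝ) * s = d + 2 ^ k * δ := by
      rw [hsdef, hNcast]; field_simp
    have h3 : (2:ℝ) ^ k * δ = c / 3 := by
      rw [hδdef]; field_simp
    calc S N ≤ (N:ℝ) * s := h1
      _ = d + c / 3 := by rw [h2, h3]
  have hex : ∃ j, S N - t < S j := ⟨N, by linarith⟩
  set j := Nat.find hex with hjdef
  have hj : S N - t < S j := Nat.find_spec hex
  have hjN : j ≤ N := Nat.find_le (by linarith : S N - t < S N)
  refine ⟨z j, ?_, ?_⟩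
  · -- dist x (z j) ≤ S j < r
    have h1 : dist x (z j) ≤ S j := by
      rw [← hz0, hSdef]; exact dist_le_range_sum_dist z j
    have h2 : S j < r := by
      rcases Nat.eq_zero_or_pos j with hj0 | hj0
      · rw [hj0]; simp [hSdef]; linarith
      · have hj' : ¬ (S N - t < S (j - 1)) := Nat.find_min hex (by omega)
        have hj1 : j - 1 < N := by omega
        have : S j = S (j - 1) + dist (z (j - 1)) (z (j - 1 + 1)) := by
          rw [show j = (j - 1) + 1 by omega, hSdef]
          exact Finset.sum_range_succ _ _
        have hstp := hstep (j - 1) hj1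
        have : S j ≤ S N - t + s := by linarith [this, hstp, not_lt.mp hj']
        have hrr : S N - t + s < r := by
          have hc3 : S N + s < r + t := by
            have := hcdef
            linarith [hSN, hsc, hcdef]
          linarith
        linarith
    linarith
  · -- dist (z j) y ≤ S N - S j < t
    have h1 : dist (z j) y ≤ S N - S j := by
      rw [← hzN]
      have h2 : dist (z j) (z N) ≤ ∑ i ∈ Finset.Ico j N, dist (z i) (z (i + 1)) :=
        dist_le_Ico_sum_dist z hjN
      have h3 : S j + ∑ i ∈ Finset.Ico j N, dist (z i) (z (i + 1)) = S N := by
        rw [hSdef]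
        simp only [Finset.range_eq_Ico]
        exact Finset.sum_Ico_consecutive _ (Nat.zero_le j) hjN
      linarith
    linarith

/-- **the hard inequality of the relative Milnor–Švarc lemma.**
Let `G` act by isometries on a length space `X`, discontinuously and cocompactly with
compact fundamental set `K ∋ x₀`, and let `ε > 0` be such that for all `g`, either
`gK ∩ K ≠ ∅` or `d(gK, K) > ε`. Let `dΓ` be a left-invariant (pseudo-)metric on `G`
(e.g. the coned-off Cayley graph metric on the orbit of the base vertex) in which every
`g` with `gK ∩ K ≠ ∅` is within distance `2` of the identity. Then
`dΓ(p, q) < (2/ε)·d_X(p x₀, q x₀) + 4` for all `p, q ∈ G`; in particular the orbit map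
is a quasi-isometric embedding. -/
theorem hard_inequality_relative_milnor_svarc
    (G X : Type*) [Group G] [MetricSpace X] [MulAction G X] [IsIsometricSMul G X]
    (hlength : IsLengthSpace X)
    (hdisc : ∀ x : X, ∃ δ > (0 : ℝ), ∀ g : G, g • x ≠ x → δ < dist x (g • x))
    (K : Set X) (hK : IsCompact K) (hcov : ∀ y : X, ∃ g : G, y ∈ g • K)
    (x₀ : X) (hx₀ : x₀ ∈ K)
    (ε : ℝ) (hε : 0 < ε)
    (hsep : ∀ g : G, ((g • K) ∩ K).Nonempty ∨ ε < setDist (g • K) K)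
    (dΓ : G → G → ℝ)
    (hself : ∀ a : G, dΓ a a = 0)
    (hsymm : ∀ a b : G, dΓ a b = dΓ b a)
    (htri : ∀ a b c : G, dΓ a c ≤ dΓ a b + dΓ b c)
    (hinv : ∀ g a b : G, dΓ (g * a) (g * b) = dΓ a b)
    (hshort : ∀ g : G, ((g • K) ∩ K).Nonempty → dΓ 1 g ≤ 2) :
    ∀ p q : G, dΓ p q < (2 / ε) * dist (p • x₀) (q • x₀) + 4 := by
  -- one step: points in adjacent translates give dΓ ≤ 2
  have short : ∀ g h : G, ∀ y z : X, y ∈ g • K → z ∈ h • K → dist y z < ε →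
      dΓ g h ≤ 2 := by
    intro g h y z hy hz hd
    obtain ⟨ky, hkyK, hky⟩ := hy
    obtain ⟨kz, hkzK, hkz⟩ := hz
    have hky' : g • ky = y := hky
    have hkz' : h • kz = z := hkz
    have hmem1 : g⁻¹ • z ∈ (g⁻¹ * h) • K := by
      refine ⟨kz, hkzK, ?_⟩
      show (g⁻¹ * h) • kz = g⁻¹ • z
      rw [mul_smul, hkz']
    have hmem2 : g⁻¹ • y ∈ K := by
      rw [← hky', inv_smul_smul]
      exact hkyK
    have hle : setDist ((g⁻¹ * h) • K) K ≤ dist y z := by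
      calc setDist ((g⁻¹ * h) • K) K ≤ dist (g⁻¹ • z) (g⁻¹ • y) :=
          setDist_le_dist hmem1 hmem2
        _ = dist z y := dist_smul _ _ _
        _ = dist y z := dist_comm _ _
    have hne : ((g⁻¹ * h) • K ∩ K).Nonempty := by
      rcases hsep (g⁻¹ * h) with h1 | h1
      · exact h1
      · exact absurd (lt_of_lt_of_le h1 hle) (not_lt.mpr (le_of_lt hd))
    have h2 := hshort _ hne
    have h3 := hinv g 1 (g⁻¹ * h)
    rw [mul_one, mul_inv_cancel_left] at h3
    rw [h3]
    exact h2
  -- main induction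
  have main : ∀ n : ℕ, ∀ g h : G, ∀ y z : X, y ∈ g • K → z ∈ h • K →
      dist y z < ((n : ℝ) + 1) * ε → dΓ g h ≤ 2 * ((n : ℝ) + 1) := by
    intro n
    induction n using Nat.strong_induction_on with
    | _ n IH =>
      intro g h y z hy hz hd
      match n with
      | 0 =>
        have := short g h y z hy hz (by push_cast at hd; linarith)
        push_cast
        linarith
      | Nat.succ m =>
        have ha1 : 1 ≤ (m + 2) / 2 := by omega
        set a := (m + 2) / 2 with hadef
        set b := (m + 2) - a with hbdef
        have hb1 : 1 ≤ b := by omega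
        have hab : a + b = m + 2 := by omega
        have ham : a - 1 < m + 1 := by omega
        have hbm : b - 1 < m + 1 := by omega
        have hacast : ((a - 1 : ℕ) : ℝ) + 1 = (a : ℝ) := by
          push_cast [Nat.cast_sub ha1]; ring
        have hbcast : ((b - 1 : ℕ) : ℝ) + 1 = (b : ℝ) := by
          push_cast [Nat.cast_sub hb1]; ring
        have hdist : dist y z < (a : ℝ) * ε + (b : ℝ) * ε := by
          have : ((a : ℝ) + (b : ℝ)) = (m : ℝ) + 2 := by
            exact_mod_cast congrArg (Nat.cast : ℕ → ℝ) hab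
          have hd' : dist y z < ((m : ℝ) + 2) * ε := by push_cast at hd; linarith
          nlinarith [hd']
        obtain ⟨w, hw1, hw2⟩ := intermediate_point hlength y z ((a : ℝ) * ε) ((b : ℝ) * ε)
          (mul_pos (by exact_mod_cast ha1) hε)
          (mul_pos (by exact_mod_cast hb1) hε)
          hdist
        obtain ⟨gm, hgm⟩ := hcov w
        have h1 := IH (a - 1) ham g gm y w hy hgm (by rw [hacast]; exact hw1)
        have h2 := IH (b - 1) hbm gm h w z hgm hz (by rw [hbcast]; exact hw2)
        rw [hacast] at h1
        rw [hbcast] at h2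
        have h3 := htri g gm h
        have h4 : ((a : ℝ) + (b : ℝ)) = (m : ℝ) + 2 := by
          exact_mod_cast congrArg (Nat.cast : ℕ → ℝ) hab
        push_cast
        linarith
  intro p q
  set d := dist (p • x₀) (q • x₀) with hddef
  have hd0 : 0 ≤ d := dist_nonneg
  set n := ⌊d / ε⌋₊ with hndef
  have h1 : d < ((n : ℝ) + 1) * ε := by
    have := Nat.lt_floor_add_one (d / ε)
    rw [div_lt_iff₀ hε] at this
    linarith
  have h2 : (n : ℝ) ≤ d / ε := Nat.floor_le (by positivity)
  have hy : p • x₀ ∈ p • K := Set.smul_mem_smul_set hx₀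
  have hz : q • x₀ ∈ q • K := Set.smul_mem_smul_set hx₀
  have h3 := main n p q (p • x₀) (q • x₀) hy hz h1
  have h4 : 2 / ε * d = 2 * (d / ε) := by ring
  calc dΓ p q ≤ 2 * ((n : ℝ) + 1) := h3
    _ ≤ 2 * (d / ε) + 2 := by linarith
    _ < 2 / ε * d + 4 := by rw [h4]; linarith
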